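/- Let (Q,W) be a QP with cut C, μ a slope function, and α a dimension vector such that (α,μ) is numb to C, meaning the vector bundle π: Rep_α(Q) → Rep_α(Q_C) restricts to a vector bundle over μ-semistable loci. Then |φ_ω(Rep^μ_α(Q))| = q^{⟨α,α⟩_C} · |Rep^μ_α(J(Q,W;C))|. -/

import Mathlib

namespace QP

structure FQuiver where
  V : Type
  E : Type
  [fV : Fintype V]
  [fE : Fintype E]
  [dV : DecidableEq V]
  [dE : DecidableEq E]
  src : E → V
  tgt : E → V

attribute [instance] FQuiver.fV FQuiver.fE FQuiver.dV FQuiver.dE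

variable (Q : FQuiver) (K : Type) [Field K] [Fintype K]

/-- A finite-dimensional representation of the quiver `Q` over `K`. -/
structure Rep where
  d : Q.V → ℕ
  m : ∀ e : Q.E, (Fin (d (Q.src e)) → K) →ₗ[K] (Fin (d (Q.tgt e)) → K)

variable {Q K}

/-- Morphisms of representations. -/
structure Hom (M N : Rep Q K) where
  f : ∀ v, (Fin (M.d v) → K) →ₗ[K] (Fin (N.d v) → K)
  comm : ∀ e, (f (Q.tgt e)).comp (M.m e) = (N.m e).comp (f (Q.src e))

def Hom.IsIso {M N : Rep Q K} (φ : Hom M N) : Prop := ∀ v, Function.Bijective (φ.f v)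

/-- Isomorphism of representations. -/
def repIso (M N : Rep Q K) : Prop := ∃ φ : Hom M N, φ.IsIso

/-- The number of automorphisms `a_M = |Aut(M)|`. -/
noncomputable def aut (M : Rep Q K) : ℕ := Nat.card {φ : Hom M M // φ.IsIso}

/-- `ι, π` form a short exact sequence `0 → V' → W → U → 0`. -/
def IsExactPair {V' W U : Rep Q K} (ι : Hom V' W) (π : Hom W U) : Prop :=
  ∀ v, Function.Injective (ι.f v) ∧ Function.Surjective (π.f v) ∧
    LinearMap.range (ι.f v) = LinearMap.ker (π.f v)

/-- Number of exact pairs `0 → V' → W → U → 0`; equals `F^W_{U V'} · a_U · a_{V'}`. -/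
noncomputable def epairs (U V' W : Rep Q K) : ℕ :=
  Nat.card {p : Hom V' W × Hom W U // IsExactPair p.1 p.2}

variable (Q K) in
/-- Representations with a fixed dimension vector. -/
def RepOf (d : Q.V → ℕ) := ∀ e : Q.E, (Fin (d (Q.src e)) → K) →ₗ[K] (Fin (d (Q.tgt e)) → K)

def RepOf.toRep {d : Q.V → ℕ} (m : RepOf Q K d) : Rep Q K := ⟨d, m⟩

variable (Q K) in
/-- `|GL_d| = ∏_v |GL_{d v}(K)|`. -/
noncomputable def glcard (d : Q.V → ℕ) : ℕ :=
  ∏ v : Q.V, Nat.card ((Fin (d v) → K) ≃ₗ[K] (Fin (d v) → K))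

/-- A Hall-algebra element constant on isomorphism classes. -/
def IsoInvariant (h : Rep Q K → ℚ) : Prop := ∀ M N, repIso M N → h M = h N

/-- The Hall product.  For iso-invariant `h₁ h₂` this computes
`([U][V] = ∑_W F^W_{UV}[W])`-multiplication, coefficientwise:
`(h₁ * h₂)(W) = ∑_{[U],[V]} h₁(U) h₂(V) F^W_{UV}`, using that the number of exact
pairs is `F^W_{UV} a_U a_V` and that each iso class of dimension `δ` has
`glcard δ / a` objects. -/
noncomputable def hmul (h₁ h₂ : Rep Q K → ℚ) : Rep Q K → ℚ := fun W =>
  ∑ᶠ (δ : Q.V → ℕ) (_ : ∀ v, δ v ≤ W.d v) (mV : RepOf Q K δ)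
      (mU : RepOf Q K fun v => W.d v - δ v),
    h₁ mU.toRep * h₂ mV.toRep * (epairs mU.toRep mV.toRep W : ℚ) /
      ((glcard Q K δ : ℚ) * (glcard Q K fun v => W.d v - δ v))

/-- The unit `[0]` of the Hall algebra. -/
noncomputable def hone : Rep Q K → ℚ := fun W => if W.d = fun _ => 0 then 1 else 0

open Classical in
/-- `χ(𝒞) = ∑_{M ∈ 𝒞} [M]` for a (iso-closed) subcategory cut out by `P`. -/
noncomputable def chi (P : Rep Q K → Prop) : Rep Q K → ℚ := fun M => if P M then 1 else 0

end QP

namespace QP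

variable {Q : FQuiver} {K : Type} [Field K] [Fintype K]

/-- The slope `μ = σ/θ` of a dimension vector. -/
noncomputable def slope (σ θ : Q.V → ℤ) (α : Q.V → ℕ) : ℚ :=
  (∑ v, (σ v : ℚ) * α v) / (∑ v, (θ v : ℚ) * α v)

/-- `μ`-semistability: `μ(dim L) ≤ μ(dim M)` for every nonzero subrepresentation. -/
def Semistable (σ θ : Q.V → ℤ) (M : Rep Q K) : Prop :=
  ∀ (L : Rep Q K) (ι : Hom L M), (∀ v, Function.Injective (ι.f v)) → L.d ≠ 0 →
    slope σ θ L.d ≤ slope σ θ M.d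

end QP

namespace QP

/-- Walks (composable paths) in a quiver, from `a` to `b`. -/
inductive Walk (Q : FQuiver) : Q.V → Q.V → Type
  | nil (v : Q.V) : Walk Q v v
  | cons {w : Q.V} (e : Q.E) (p : Walk Q (Q.tgt e) w) : Walk Q (Q.src e) w

variable {Q : FQuiver} {K : Type} [Field K] [Fintype K]

/-- Evaluation of a walk on a representation: the composite linear map. -/
noncomputable def Rep.evalWalk (M : Rep Q K) :
    ∀ {a b : Q.V}, Walk Q a b → ((Fin (M.d a) → K) →ₗ[K] (Fin (M.d b) → K))
  | _, _, .nil _ => LinearMap.id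
  | _, _, .cons e p => (M.evalWalk p).comp (M.m e)

/-- The number of arrows of a walk lying in a set `C` of arrows. -/
def Walk.countIn (C : Set Q.E) [DecidablePred (· ∈ C)] :
    ∀ {a b : Q.V}, Walk Q a b → ℕ
  | _, _, .nil _ => 0
  | _, _, .cons e p => (if e ∈ C then 1 else 0) + countIn C p

variable (Q K) in
/-- A potential: a finite linear combination of oriented cycles. -/
abbrev Potential := List (K × Σ v : Q.V, Walk Q v v)

/-- The trace function `ω(M) = tr W(M)` of a potential. -/
noncomputable def traceFn (W : Potential Q K) (M : Rep Q K) : K :=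
  (W.map fun p => p.1 * LinearMap.trace K _ (M.evalWalk p.2.2)).sum

/-- `⟨α,β⟩_C = ∑_{c ∈ C} α(tc)·β(hc)`. -/
def cform (C : Set Q.E) [DecidablePred (· ∈ C)] (α β : Q.V → ℕ) : ℕ :=
  ∑ e ∈ Finset.univ.filter (· ∈ C), α (Q.src e) * β (Q.tgt e)

/-- `N` is (the image in `Rep_α(Q_C)` of) a representation of the truncated Jacobian
algebra `J(Q,W;C)`: it is zero along the cut, and the trace function vanishes on the
whole fiber of the bundle `Rep_α(Q) → Rep_α(Q_C)` over `N` (equivalently, `N` satisfies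
the Jacobian relations `∂_c W = 0`, `c ∈ C`). -/
def IsJacobiRep (W : Potential Q K) (C : Set Q.E) {α : Q.V → ℕ}
    (N : RepOf Q K α) : Prop :=
  (∀ e ∈ C, N e = 0) ∧
  ∀ M : RepOf Q K α, (∀ e ∉ C, M e = N e) → traceFn W M.toRep = 0

end QP

namespace QP

section Stmt7Aux

variable (Q : FQuiver) (K : Type) [Field K] [Fintype K]

instance finiteLinMapFin (n m : ℕ) : Finite ((Fin n → K) →ₗ[K] (Fin m → K)) :=
  Finite.of_injective (fun f => (f : (Fin n → K) → (Fin m → K))) DFunLike.coe_injective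

variable (C : Set Q.E) [DecidablePred (· ∈ C)] (α : Q.V → ℕ)

/-- Fiber coordinates: components along the cut. -/
abbrev Xsp : Type :=
  ∀ e : {e : Q.E // e ∈ C}, (Fin (α (Q.src e)) → K) →ₗ[K] (Fin (α (Q.tgt e)) → K)

/-- Base coordinates: components off the cut. -/
abbrev Bsp : Type :=
  ∀ e : {e : Q.E // ¬ e ∈ C}, (Fin (α (Q.src e)) → K) →ₗ[K] (Fin (α (Q.tgt e)) → K)

/-- Glue fiber and base coordinates into a representation. -/
def glue (x : Xsp Q K C α) (b : Bsp Q K C α) : RepOf Q K α :=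
  fun e => if h : e ∈ C then x ⟨e, h⟩ else b ⟨e, h⟩

/-- Splitting a representation into fiber and base coordinates. -/
def splitEquiv : RepOf Q K α ≃ (Xsp Q K C α) × (Bsp Q K C α) where
  toFun m := (fun e => m e, fun e => m e)
  invFun p := glue Q K C α p.1 p.2
  left_inv m := by
    funext e
    by_cases h : e ∈ C <;> simp [glue, h]
  right_inv p := by
    obtain ⟨x, b⟩ := p
    refine Prod.ext ?_ ?_ <;> funext e <;> obtain ⟨e, he⟩ := e <;> simp [glue, he]

/-- Evaluation of a walk on a glued representation, with clean types. -/
noncomputable def gev (x : Xsp Q K C α) (b : Bsp Q K C α) {a b' : Q.V} (p : Walk Q a b') :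
    (Fin (α a) → K) →ₗ[K] (Fin (α b') → K) :=
  (glue Q K C α x b).toRep.evalWalk p

variable {Q K C α}

lemma gev_nil (x : Xsp Q K C α) (b : Bsp Q K C α) (v : Q.V) :
    gev Q K C α x b (.nil v) = LinearMap.id := rfl

lemma gev_cons (x : Xsp Q K C α) (b : Bsp Q K C α) {w : Q.V} (e : Q.E)
    (p : Walk Q (Q.tgt e) w) :
    gev Q K C α x b (.cons e p) = (gev Q K C α x b p).comp (glue Q K C α x b e) := rfl

lemma gev_count0 {a b' : Q.V} (p : Walk Q a b') (hp : Walk.countIn C p = 0)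
    (x y : Xsp Q K C α) (b : Bsp Q K C α) :
    gev Q K C α x b p = gev Q K C α y b p := by
  induction p with
  | nil v => rfl
  | cons e p ih =>
      simp only [Walk.countIn] at hp
      by_cases h : e ∈ C
      · simp [h] at hp
      · rw [gev_cons, gev_cons, ih (by simpa [h] using hp)]
        congr 1
        simp [glue, h]

lemma gev_add {a b' : Q.V} (p : Walk Q a b') (hp : Walk.countIn C p = 1)
    (x y : Xsp Q K C α) (b : Bsp Q K C α) :
    gev Q K C α (x + y) b p = gev Q K C α x b p + gev Q K C α y b p := by
  induction p with
  | nil v => exact absurd hp Nat.zero_ne_one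
  | cons e p ih =>
      simp only [Walk.countIn] at hp
      by_cases h : e ∈ C
      · have hp0 : Walk.countIn C p = 0 := by simpa [h] using hp
        rw [gev_cons, gev_cons, gev_cons, gev_count0 p hp0 (x + y) x b,
          gev_count0 p hp0 y x b]
        have hg : glue Q K C α (x + y) b e = glue Q K C α x b e + glue Q K C α y b e := by
          simp [glue, h]
        rw [hg, LinearMap.comp_add]
      · have hp1 : Walk.countIn C p = 1 := by simpa [h] using hp
        have hm : ∀ z : Xsp Q K C α, glue Q K C α z b e = b ⟨e, h⟩ := fun z => by
          simp [glue, h]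
        rw [gev_cons, gev_cons, gev_cons, hm (x + y), hm x, hm y, ih hp1,
          LinearMap.add_comp]

lemma gev_smul {a b' : Q.V} (p : Walk Q a b') (hp : Walk.countIn C p = 1)
    (c : K) (x : Xsp Q K C α) (b : Bsp Q K C α) :
    gev Q K C α (c • x) b p = c • gev Q K C α x b p := by
  induction p with
  | nil v => exact absurd hp Nat.zero_ne_one
  | cons e p ih =>
      simp only [Walk.countIn] at hp
      by_cases h : e ∈ C
      · have hp0 : Walk.countIn C p = 0 := by simpa [h] using hp
        rw [gev_cons, gev_cons, gev_count0 p hp0 (c • x) x b]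
        have hg : glue Q K C α (c • x) b e = c • glue Q K C α x b e := by
          simp [glue, h]
        rw [hg, LinearMap.comp_smul]
      · have hp1 : Walk.countIn C p = 1 := by simpa [h] using hp
        have hm : ∀ z : Xsp Q K C α, glue Q K C α z b e = b ⟨e, h⟩ := fun z => by
          simp [glue, h]
        rw [gev_cons, gev_cons, hm (c • x), hm x, ih hp1, LinearMap.smul_comp]

lemma trace_eval_glue_add (v : Q.V) (p : Walk Q v v) (hp : Walk.countIn C p = 1)
    (x y : Xsp Q K C α) (b : Bsp Q K C α) :
    (LinearMap.trace K (Fin ((glue Q K C α (x + y) b).toRep.d v) → K))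
        ((glue Q K C α (x + y) b).toRep.evalWalk p) =
      (LinearMap.trace K (Fin ((glue Q K C α x b).toRep.d v) → K))
          ((glue Q K C α x b).toRep.evalWalk p) +
        (LinearMap.trace K (Fin ((glue Q K C α y b).toRep.d v) → K))
          ((glue Q K C α y b).toRep.evalWalk p) := by
  calc (LinearMap.trace K (Fin ((glue Q K C α (x + y) b).toRep.d v) → K))
        ((glue Q K C α (x + y) b).toRep.evalWalk p)
      = (LinearMap.trace K (Fin (α v) → K)) (gev Q K C α (x + y) b p) := rfl
    _ = (LinearMap.trace K (Fin (α v) → K)) (gev Q K C α x b p + gev Q K C α y b p) := by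
        rw [gev_add p hp x y b]
    _ = (LinearMap.trace K (Fin (α v) → K)) (gev Q K C α x b p) +
          (LinearMap.trace K (Fin (α v) → K)) (gev Q K C α y b p) := map_add _ _ _
    _ = _ := rfl

lemma trace_eval_glue_smul (v : Q.V) (p : Walk Q v v) (hp : Walk.countIn C p = 1)
    (c : K) (x : Xsp Q K C α) (b : Bsp Q K C α) :
    (LinearMap.trace K (Fin ((glue Q K C α (c • x) b).toRep.d v) → K))
        ((glue Q K C α (c • x) b).toRep.evalWalk p) =
      c * (LinearMap.trace K (Fin ((glue Q K C α x b).toRep.d v) → K))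
          ((glue Q K C α x b).toRep.evalWalk p) := by
  calc (LinearMap.trace K (Fin ((glue Q K C α (c • x) b).toRep.d v) → K))
        ((glue Q K C α (c • x) b).toRep.evalWalk p)
      = (LinearMap.trace K (Fin (α v) → K)) (gev Q K C α (c • x) b p) := rfl
    _ = (LinearMap.trace K (Fin (α v) → K)) (c • gev Q K C α x b p) := by
        rw [gev_smul p hp c x b]
    _ = c • (LinearMap.trace K (Fin (α v) → K)) (gev Q K C α x b p) := map_smul _ _ _
    _ = c * (LinearMap.trace K (Fin (α v) → K)) (gev Q K C α x b p) := by
        rw [smul_eq_mul]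
    _ = _ := rfl

lemma traceFn_glue_add (W : Potential Q K) (hcut : ∀ p ∈ W, Walk.countIn C p.2.2 = 1)
    (x y : Xsp Q K C α) (b : Bsp Q K C α) :
    traceFn W (glue Q K C α (x + y) b).toRep =
      traceFn W (glue Q K C α x b).toRep + traceFn W (glue Q K C α y b).toRep := by
  induction W with
  | nil => simp [traceFn]
  | cons w ws ih =>
      have ih' := ih (fun p hp => hcut p (List.mem_cons_of_mem _ hp))
      simp only [traceFn, List.map_cons, List.sum_cons] at ih' ⊢
      rw [ih', trace_eval_glue_add w.2.1 w.2.2 (hcut w List.mem_cons_self) x y b,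
        mul_add]
      ring

lemma traceFn_glue_smul (W : Potential Q K) (hcut : ∀ p ∈ W, Walk.countIn C p.2.2 = 1)
    (c : K) (x : Xsp Q K C α) (b : Bsp Q K C α) :
    traceFn W (glue Q K C α (c • x) b).toRep = c * traceFn W (glue Q K C α x b).toRep := by
  induction W with
  | nil => simp [traceFn]
  | cons w ws ih =>
      have ih' := ih (fun p hp => hcut p (List.mem_cons_of_mem _ hp))
      simp only [traceFn, List.map_cons, List.sum_cons] at ih' ⊢
      rw [ih', trace_eval_glue_smul w.2.1 w.2.2 (hcut w List.mem_cons_self) c x b]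
      ring

open Classical in
lemma count_diff {X : Type} [AddCommGroup X] [Module K X] [Finite X] (T : X → K)
    (hadd : ∀ x y, T (x + y) = T x + T y) (hsmul : ∀ (c : K) x, T (c • x) = c * T x) :
    (Nat.card {x : X // T x = 0} : ℤ) - (Nat.card {x : X // T x = 1} : ℤ) =
      if ∀ x, T x = 0 then (Nat.card X : ℤ) else 0 := by
  by_cases h : ∀ x, T x = 0
  · rw [if_pos h]
    haveI : IsEmpty {x : X // T x = 1} :=
      ⟨fun x => zero_ne_one ((h x.1).symm.trans x.2)⟩
    rw [Nat.card_congr (Equiv.subtypeUnivEquiv h),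
      (Nat.card_of_isEmpty : Nat.card {x : X // T x = 1} = 0)]
    simp
  · rw [if_neg h]
    push_neg at h
    obtain ⟨x₀, hx₀⟩ := h
    have hneg : ∀ x, T (-x) = - T x := fun x => by
      have := hsmul (-1) x; simpa using this
    have hTx₁ : T ((T x₀)⁻¹ • x₀) = 1 := by rw [hsmul, inv_mul_cancel₀ hx₀]
    set x₁ := (T x₀)⁻¹ • x₀
    have : Nat.card {x : X // T x = 0} = Nat.card {x : X // T x = 1} := by
      apply Nat.card_congr
      refine ⟨fun x => ⟨x.1 + x₁, by rw [hadd, x.2, hTx₁, zero_add]⟩,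
        fun x => ⟨x.1 - x₁, by rw [sub_eq_add_neg, hadd, hneg, x.2, hTx₁]; ring⟩, ?_, ?_⟩
      · intro x; ext; simp
      · intro x; ext; simp
    rw [this]
    ring

lemma nat_card_sigma {ι : Type} [Fintype ι] (f : ι → Type) [∀ i, Finite (f i)] :
    Nat.card (Σ i, f i) = ∑ i, Nat.card (f i) := by
  haveI := fun i => Fintype.ofFinite (f i)
  simp [Nat.card_eq_fintype_card, Fintype.card_sigma]

lemma card_Xsp : Nat.card (Xsp Q K C α) = Fintype.card K ^ cform C α α := by
  rw [Nat.card_pi]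
  have h : ∀ e : {e : Q.E // e ∈ C},
      Nat.card ((Fin (α (Q.src e)) → K) →ₗ[K] (Fin (α (Q.tgt e)) → K)) =
        Fintype.card K ^ (α (Q.src e) * α (Q.tgt e)) := by
    intro e
    rw [Nat.card_congr (LinearMap.toMatrix'.toEquiv)]
    show Nat.card (Fin (α (Q.tgt e)) → Fin (α (Q.src e)) → K) = _
    rw [Nat.card_fun, Nat.card_fun, Nat.card_eq_fintype_card (α := Fin _),
      Nat.card_eq_fintype_card (α := Fin _), Nat.card_eq_fintype_card (α := K),
      Fintype.card_fin, Fintype.card_fin, ← pow_mul]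
  calc ∏ e : {e : Q.E // e ∈ C},
        Nat.card ((Fin (α (Q.src e)) → K) →ₗ[K] (Fin (α (Q.tgt e)) → K))
      = ∏ e : {e : Q.E // e ∈ C}, Fintype.card K ^ (α (Q.src e) * α (Q.tgt e)) :=
        Finset.prod_congr rfl fun e _ => h e
    _ = Fintype.card K ^ ∑ e : {e : Q.E // e ∈ C}, α (Q.src e) * α (Q.tgt e) :=
        Finset.prod_pow_eq_pow_sum _ _ _
    _ = Fintype.card K ^ cform C α α := by
        congr 1
        unfold cform
        exact (Finset.sum_subtype (Finset.univ.filter (· ∈ C)) (by simp)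
          (fun e => α (Q.src e) * α (Q.tgt e))).symm

end Stmt7Aux

/-- Let `(Q,W)` be a QP with a cut `C`, `μ = σ/θ` a slope function and
`α` a dimension vector such that `(α, μ)` is numb to `C`, i.e. the vector bundle
`π : Rep_α(Q) → Rep_α(Q_C)` restricts to the `μ`-semistable loci (semistability only
depends on the image under `π`).  Then
`|φ_ω(Rep^μ_α(Q))| = q^{⟨α,α⟩_C} · |Rep^μ_α(J(Q,W;C))|`. -/
theorem stmt7 (Q : FQuiver) (K : Type) [Field K] [Fintype K]
    (W : Potential Q K) (C : Set Q.E) [DecidablePred (· ∈ C)]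
    (hcut : ∀ p ∈ W, Walk.countIn C p.2.2 = 1)
    (σ θ : Q.V → ℤ) (hθ : ∀ α : Q.V → ℕ, α ≠ 0 → 0 < ∑ v, θ v * α v)
    (α : Q.V → ℕ)
    (hnumb : ∀ m m' : RepOf Q K α, (∀ e ∉ C, m e = m' e) →
      (Semistable σ θ m.toRep ↔ Semistable σ θ m'.toRep)) :
    (Nat.card {m : RepOf Q K α //
          Semistable σ θ m.toRep ∧ traceFn W m.toRep = 0} : ℤ) -
        Nat.card {m : RepOf Q K α //
          Semistable σ θ m.toRep ∧ traceFn W m.toRep = 1} =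
      (Fintype.card K : ℤ) ^ cform C α α *
        Nat.card {N : RepOf Q K α //
          Semistable σ θ N.toRep ∧ IsJacobiRep W C N} := by
  classical
  haveI : Fintype (Bsp Q K C α) := Fintype.ofFinite _
  -- Point counts fiberwise over the base of the bundle.
  have key : ∀ t : K,
      Nat.card {m : RepOf Q K α // Semistable σ θ m.toRep ∧ traceFn W m.toRep = t} =
        ∑ b : Bsp Q K C α, Nat.card {x : Xsp Q K C α //
          Semistable σ θ (glue Q K C α 0 b).toRep ∧
            traceFn W (glue Q K C α x b).toRep = t} := by
    intro t
    have e1 : {m : RepOf Q K α // Semistable σ θ m.toRep ∧ traceFn W m.toRep = t} ≃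
        {p : Xsp Q K C α × Bsp Q K C α //
          Semistable σ θ (glue Q K C α 0 p.2).toRep ∧
            traceFn W (glue Q K C α p.1 p.2).toRep = t} := by
      refine (splitEquiv Q K C α).subtypeEquiv fun m => ?_
      have hm : glue Q K C α ((splitEquiv Q K C α) m).1 ((splitEquiv Q K C α) m).2 = m := by
        funext e
        by_cases h : e ∈ C <;> simp [splitEquiv, glue, h] <;> rfl
      rw [hm]
      exact and_congr
        (hnumb m (glue Q K C α 0 ((splitEquiv Q K C α) m).2)
          (fun e he => by simp [splitEquiv, glue, he]; rfl)) Iff.rfl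
    have e2 := (Equiv.prodComm (Xsp Q K C α) (Bsp Q K C α)).subtypeEquiv
      (p := fun p : Xsp Q K C α × Bsp Q K C α =>
        Semistable σ θ (glue Q K C α 0 p.2).toRep ∧
          traceFn W (glue Q K C α p.1 p.2).toRep = t)
      (q := fun p : Bsp Q K C α × Xsp Q K C α =>
        Semistable σ θ (glue Q K C α 0 p.1).toRep ∧
          traceFn W (glue Q K C α p.2 p.1).toRep = t)
      (fun p => Iff.rfl)
    have e3 := Equiv.subtypeProdEquivSigmaSubtype
      (fun (b : Bsp Q K C α) (x : Xsp Q K C α) =>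
        Semistable σ θ (glue Q K C α 0 b).toRep ∧
          traceFn W (glue Q K C α x b).toRep = t)
    rw [Nat.card_congr ((e1.trans e2).trans e3), nat_card_sigma]
  -- Per-fiber difference of point counts.
  have perb : ∀ b : Bsp Q K C α,
      ((Nat.card {x : Xsp Q K C α // Semistable σ θ (glue Q K C α 0 b).toRep ∧
          traceFn W (glue Q K C α x b).toRep = 0} : ℤ) -
        (Nat.card {x : Xsp Q K C α // Semistable σ θ (glue Q K C α 0 b).toRep ∧
          traceFn W (glue Q K C α x b).toRep = 1} : ℤ)) =
      if Semistable σ θ (glue Q K C α 0 b).toRep ∧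
          (∀ x : Xsp Q K C α, traceFn W (glue Q K C α x b).toRep = 0)
        then (Fintype.card K : ℤ) ^ cform C α α else 0 := by
    intro b
    by_cases hb : Semistable σ θ (glue Q K C α 0 b).toRep
    · rw [Nat.card_congr (Equiv.subtypeEquivRight
          (p := fun x : Xsp Q K C α => Semistable σ θ (glue Q K C α 0 b).toRep ∧
            traceFn W (glue Q K C α x b).toRep = 0)
          (q := fun x : Xsp Q K C α => traceFn W (glue Q K C α x b).toRep = 0)
          (fun x => by simp [hb])),
        Nat.card_congr (Equiv.subtypeEquivRight
          (p := fun x : Xsp Q K C α => Semistable σ θ (glue Q K C α 0 b).toRep ∧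
            traceFn W (glue Q K C α x b).toRep = 1)
          (q := fun x : Xsp Q K C α => traceFn W (glue Q K C α x b).toRep = 1)
          (fun x => by simp [hb]))]
      have hcd := count_diff (K := K) (X := Xsp Q K C α)
        (fun x => traceFn W (glue Q K C α x b).toRep)
        (fun x y => traceFn_glue_add W hcut x y b)
        (fun c x => traceFn_glue_smul W hcut c x b)
      beta_reduce at hcd
      rw [hcd, card_Xsp]
      by_cases hall : ∀ x : Xsp Q K C α, traceFn W (glue Q K C α x b).toRep = 0
      · rw [if_pos hall, if_pos ⟨hb, hall⟩]
        push_cast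
        ring
      · rw [if_neg hall, if_neg (fun hc => hall hc.2)]
    · haveI h0 : IsEmpty {x : Xsp Q K C α // Semistable σ θ (glue Q K C α 0 b).toRep ∧
          traceFn W (glue Q K C α x b).toRep = 0} := ⟨fun x => hb x.2.1⟩
      haveI h1 : IsEmpty {x : Xsp Q K C α // Semistable σ θ (glue Q K C α 0 b).toRep ∧
          traceFn W (glue Q K C α x b).toRep = 1} := ⟨fun x => hb x.2.1⟩
      rw [Nat.card_of_isEmpty (α := {x : Xsp Q K C α //
            Semistable σ θ (glue Q K C α 0 b).toRep ∧
              traceFn W (glue Q K C α x b).toRep = 0}),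
        Nat.card_of_isEmpty (α := {x : Xsp Q K C α //
            Semistable σ θ (glue Q K C α 0 b).toRep ∧
              traceFn W (glue Q K C α x b).toRep = 1}),
        if_neg (fun hc => hb hc.1)]
      simp
  -- The semistable Jacobian locus corresponds to the relevant base points.
  have e4 : {N : RepOf Q K α // Semistable σ θ N.toRep ∧ IsJacobiRep W C N} ≃
      {b : Bsp Q K C α // Semistable σ θ (glue Q K C α 0 b).toRep ∧
        ∀ x : Xsp Q K C α, traceFn W (glue Q K C α x b).toRep = 0} := by
    refine ⟨fun N => ⟨fun e => N.1 e, ?_, ?_⟩,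
      fun b => ⟨glue Q K C α 0 b.1, b.2.1, ?_, ?_⟩, ?_, ?_⟩
    · exact (hnumb N.1 (glue Q K C α 0 fun e => N.1 e)
        (fun e he => by simp [glue, he])).mp N.2.1
    · intro x
      exact N.2.2.2 (glue Q K C α x fun e => N.1 e) (fun e he => by simp [glue, he])
    · intro e he
      simp [glue, he]
    · intro M hM
      have hMg : M = glue Q K C α (fun e => M e) b.1 := by
        funext e
        by_cases h : e ∈ C
        · simp [glue, h]
        · rw [hM e h]; simp [glue, h]
      rw [hMg]
      exact b.2.2 _
    · intro N
      apply Subtype.ext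
      funext e
      by_cases h : e ∈ C
      · simp [glue, h, N.2.2.1 e h]
      · simp [glue, h]
    · intro b
      apply Subtype.ext
      funext e
      obtain ⟨e, he⟩ := e
      simp [glue, he]
  -- Assemble.
  rw [key 0, key 1]
  push_cast
  rw [← Finset.sum_sub_distrib, Finset.sum_congr rfl (fun b _ => perb b),
    ← Finset.sum_filter, Finset.sum_const, nsmul_eq_mul, mul_comm]
  congr 1
  rw [Nat.card_congr e4]
  have : (Finset.univ.filter (fun b : Bsp Q K C α =>
      Semistable σ θ (glue Q K C α 0 b).toRep ∧
        ∀ x : Xsp Q K C α, traceFn W (glue Q K C α x b).toRep = 0)).card =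
      Nat.card {b : Bsp Q K C α // Semistable σ θ (glue Q K C α 0 b).toRep ∧
        ∀ x : Xsp Q K C α, traceFn W (glue Q K C α x b).toRep = 0} := by
    rw [Nat.card_eq_fintype_card, Fintype.card_subtype]
  rw [this]

end QP
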